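/- A simple augmented tree (X, 𝓔) of an equicontractive IFS of contractive similitudes is Gromov hyperbolic; indeed the lengths of its horizontal geodesics are uniformly bounded. -/

import Mathlib

open Metric Filter

namespace HypIFS

/-- Euclidean space `ℝ^d`. -/
abbrev Euc (d : ℕ) := EuclideanSpace ℝ (Fin d)

/-- The distance `dist(A, B)` between two subsets of a metric space. -/
noncomputable def setDist {E : Type*} [PseudoMetricSpace E] (A B : Set E) : ℝ :=
  sInf (Set.image2 dist A B)

variable {d N : ℕ}

/-- For a word `x = i₁⋯i_k`, the composition `S_x = S_{i₁} ∘ ⋯ ∘ S_{i_k}`. -/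
def sWord (S : Fin N → Euc d → Euc d) : List (Fin N) → Euc d → Euc d :=
  fun w => w.foldr (fun i f => S i ∘ f) id

/-- For a word `x = i₁⋯i_k`, the product `r_x = r_{i₁} ⋯ r_{i_k}` of contraction ratios. -/
def rWord (ρ : Fin N → ℝ) (w : List (Fin N)) : ℝ := (w.map ρ).prod

/-- The coding level `𝓙_n = {i₁⋯i_k : r_{i₁⋯i_k} ≤ rⁿ < r_{i₁⋯i_{k−1}}}`,
with `𝓙_0` consisting of the empty word. -/
def Jlevel (ρ : Fin N → ℝ) (r : ℝ) (n : ℕ) : Set (List (Fin N)) :=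
  if n = 0 then {([] : List (Fin N))}
  else {w | rWord ρ w ≤ r ^ n ∧ r ^ n < rWord ρ w.dropLast}

/-- The vertical (parent–child) edge relation: `x ∈ 𝓙_n` is the initial segment
of `y ∈ 𝓙_{n+1}`. -/
def EV (ρ : Fin N → ℝ) (r : ℝ) (x y : List (Fin N)) : Prop :=
  ∃ n : ℕ, x ∈ Jlevel ρ r n ∧ y ∈ Jlevel ρ r (n + 1) ∧ x <+: y

/-- The horizontal edge relation: `x ≠ y` in the same level `𝓙_n` with
`dist(K_x, K_y) ≤ κ rⁿ`. -/
def EH (S : Fin N → Euc d → Euc d) (ρ : Fin N → ℝ) (r κ : ℝ) (K : Set (Euc d))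
    (x y : List (Fin N)) : Prop :=
  ∃ n : ℕ, x ∈ Jlevel ρ r n ∧ y ∈ Jlevel ρ r n ∧ x ≠ y ∧
    setDist (sWord S x '' K) (sWord S y '' K) ≤ κ * r ^ n

/-- The augmented tree `(X, 𝓔)`, `𝓔 = 𝓔_v ∪ 𝓔_h`, as a graph on the word space
(words belonging to no level `𝓙_n` are isolated vertices). -/
def augIFS (S : Fin N → Euc d → Euc d) (ρ : Fin N → ℝ) (r κ : ℝ) (K : Set (Euc d)) :
    SimpleGraph (List (Fin N)) where
  Adj x y := (EV ρ r x y ∨ EV ρ r y x ∨ EH S ρ r κ K x y ∨ EH S ρ r κ K y x) ∧ x ≠ y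
  symm := by
    constructor
    rintro x y ⟨h1 | h2 | h3 | h4, hne⟩
    · exact ⟨Or.inr (Or.inl h1), hne.symm⟩
    · exact ⟨Or.inl h2, hne.symm⟩
    · exact ⟨Or.inr (Or.inr (Or.inr h3)), hne.symm⟩
    · exact ⟨Or.inr (Or.inr (Or.inl h4)), hne.symm⟩
  loopless := ⟨fun x h => h.2 rfl⟩

/-- A graph is of bounded degree if `sup_x deg(x) < ∞`. -/
def BddDeg {V : Type*} (G : SimpleGraph V) : Prop :=
  ∃ M : ℕ, ∀ x : V, {y | G.Adj x y}.Finite ∧ {y | G.Adj x y}.ncard ≤ M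

variable {d N : ℕ}

/-- Horizontal edge relation for an equicontractive IFS (levels are word
lengths): `|x| = |y|`, `x ≠ y`, `dist(K_x, K_y) ≤ κ r^{|x|}`. -/
def EHe (S : Fin N → Euc d → Euc d) (r κ : ℝ) (K : Set (Euc d))
    (x y : List (Fin N)) : Prop :=
  x.length = y.length ∧ x ≠ y ∧
    setDist (sWord S x '' K) (sWord S y '' K) ≤ κ * r ^ x.length

/-- The augmented tree `(X, 𝓔)` of an equicontractive IFS: `X = Σ*`, vertical
edges join a word to the word with its last letter removed, together with the
horizontal edges. -/
def augE (S : Fin N → Euc d → Euc d) (r κ : ℝ) (K : Set (Euc d)) :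
    SimpleGraph (List (Fin N)) where
  Adj x y := (x = y.dropLast ∨ y = x.dropLast ∨ EHe S r κ K x y ∨ EHe S r κ K y x) ∧ x ≠ y
  symm := by
    constructor
    rintro x y ⟨h1 | h2 | h3 | h4, hne⟩
    · exact ⟨Or.inr (Or.inl h1), hne.symm⟩
    · exact ⟨Or.inl h2, hne.symm⟩
    · exact ⟨Or.inr (Or.inr (Or.inr h3)), hne.symm⟩
    · exact ⟨Or.inr (Or.inr (Or.inl h4)), hne.symm⟩
  loopless := ⟨fun x h => h.2 rfl⟩

/-- The horizontal subgraph `(Σⁿ, 𝓔_h)` (all levels at once; horizontal edges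
stay within one level). -/
def horizE (S : Fin N → Euc d → Euc d) (r κ : ℝ) (K : Set (Euc d)) :
    SimpleGraph (List (Fin N)) where
  Adj x y := (EHe S r κ K x y ∨ EHe S r κ K y x) ∧ x ≠ y
  symm := by
    constructor
    rintro x y ⟨h1 | h2, hne⟩
    · exact ⟨Or.inr h1, hne.symm⟩
    · exact ⟨Or.inl h2, hne.symm⟩
  loopless := ⟨fun x h => h.2 rfl⟩

/-- `T_𝓓` for the horizontal connected component `T` of the word `w`: the union
of `T` and all its descendants (a word is a descendant of `t` iff `t` is one of
its prefixes). -/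
def TD (S : Fin N → Euc d → Euc d) (r κ : ℝ) (K : Set (Euc d))
    (w : List (Fin N)) : Set (List (Fin N)) :=
  {u | ∃ t : List (Fin N), (horizE S r κ K).Reachable w t ∧ t <+: u}

/-- The augmented tree is simple: there are only finitely many horizontal
connected components up to graph isomorphism of the inherited subgraphs on
`T_𝓓`. -/
def SimpleAug (S : Fin N → Euc d → Euc d) (r κ : ℝ) (K : Set (Euc d)) : Prop :=
  ∃ F : Finset (List (Fin N)), ∀ w : List (Fin N), ∃ w' ∈ F,
    Nonempty ((augE S r κ K).induce (TD S r κ K w) ≃g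
              (augE S r κ K).induce (TD S r κ K w'))

/-- The Gromov product `|x ∧ y| = ½(|x| + |y| − d(x,y))` with respect to a root `o`. -/
noncomputable def gprod {V : Type*} (G : SimpleGraph V) (o x y : V) : ℝ :=
  ((G.dist o x : ℝ) + (G.dist o y : ℝ) - (G.dist x y : ℝ)) / 2

/-- Gromov hyperbolicity of a graph with basepoint `o`. -/
def GromovHyperbolic {V : Type*} (G : SimpleGraph V) (o : V) : Prop :=
  ∃ δ : ℝ, 0 ≤ δ ∧ ∀ x y z : V,
    min (gprod G o x z) (gprod G o z y) - δ ≤ gprod G o x y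

/-- `w 0, …, w n` is a horizontal geodesic of the augmented tree of an
equicontractive IFS: consecutive vertices joined by horizontal edges (hence all
in one level) and the path has minimal length. -/
def IsHorizGeodesicE (S : Fin N → Euc d → Euc d) (r κ : ℝ) (K : Set (Euc d))
    (n : ℕ) (w : ℕ → List (Fin N)) : Prop :=
  (∀ i < n, EHe S r κ K (w i) (w (i + 1))) ∧
  (augE S r κ K).dist (w 0) (w n) = n

/-! ### Auxiliary machinery for the proof -/

section SetDistLemmas

variable {E : Type*} [PseudoMetricSpace E] {A B Cs : Set E}

lemma setDist_bddBelow (A B : Set E) : BddBelow (Set.image2 dist A B) := by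
  refine ⟨0, ?_⟩
  rintro x ⟨a, -, b, -, rfl⟩
  exact dist_nonneg

lemma setDist_le_dist {a b : E} (ha : a ∈ A) (hb : b ∈ B) : setDist A B ≤ dist a b :=
  csInf_le (setDist_bddBelow A B) ⟨a, ha, b, hb, rfl⟩

lemma setDist_le_setDist {A' B' : Set E} (hA : A' ⊆ A) (hB : B' ⊆ B)
    (hA' : A'.Nonempty) (hB' : B'.Nonempty) : setDist A B ≤ setDist A' B' := by
  refine le_csInf (hA'.image2 hB') ?_
  rintro x ⟨a, ha, b, hb, rfl⟩
  exact setDist_le_dist (hA ha) (hB hb)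

lemma setDist_self_nonpos (hA : A.Nonempty) : setDist A A ≤ 0 := by
  obtain ⟨a, ha⟩ := hA
  simpa using setDist_le_dist ha ha

lemma setDist_comm' (A B : Set E) : setDist A B = setDist B A := by
  unfold setDist
  congr 1
  ext x
  constructor
  · rintro ⟨a, ha, b, hb, rfl⟩
    exact ⟨b, hb, a, ha, dist_comm b a⟩
  · rintro ⟨b, hb, a, ha, rfl⟩
    exact ⟨a, ha, b, hb, dist_comm a b⟩

lemma setDist_triangle' (hA : A.Nonempty) (hB : B.Nonempty) (hC : Cs.Nonempty)
    (hBb : Bornology.IsBounded B) :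
    setDist A Cs ≤ setDist A B + Metric.diam B + setDist B Cs := by
  refine le_of_forall_pos_le_add fun ε hε => ?_
  obtain ⟨u, hu, hu'⟩ := Real.lt_sInf_add_pos (hA.image2 hB) (half_pos hε)
  obtain ⟨a, ha, b, hb, rfl⟩ := hu
  obtain ⟨v, hv, hv'⟩ := Real.lt_sInf_add_pos (hB.image2 hC) (half_pos hε)
  obtain ⟨b', hb', c, hc, rfl⟩ := hv
  have h1 : setDist A Cs ≤ dist a c := setDist_le_dist ha hc
  have h2 : dist a c ≤ dist a b + dist b b' + dist b' c := dist_triangle4 a b b' c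
  have h3 : dist b b' ≤ Metric.diam B := Metric.dist_le_diam_of_mem hBb hb hb'
  have e1 : dist a b < setDist A B + ε / 2 := hu'
  have e2 : dist b' c < setDist B Cs + ε / 2 := hv'
  linarith

end SetDistLemmas

/-- From a chain of vertices, each consecutive pair equal or adjacent, extract a walk
whose length is at most the number of "moving" steps. -/
lemma walk_of_chain {V : Type*} [DecidableEq V] (G : SimpleGraph V) (f : ℕ → V) :
    ∀ n : ℕ, (∀ i < n, f i = f (i + 1) ∨ G.Adj (f i) (f (i + 1))) →
      ∃ p : G.Walk (f 0) (f n),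
        p.length ≤ ((Finset.range n).filter fun i => f i ≠ f (i + 1)).card
  | 0, _ => ⟨SimpleGraph.Walk.nil, by simp⟩
  | (n+1), h => by
    obtain ⟨p, hp⟩ := walk_of_chain G f n (fun i hi => h i (by omega))
    have hsub : ((Finset.range n).filter fun i => f i ≠ f (i + 1)).card ≤
        ((Finset.range (n+1)).filter fun i => f i ≠ f (i + 1)).card := by
      apply Finset.card_le_card
      apply Finset.filter_subset_filter
      intro a ha
      simp only [Finset.mem_range] at *
      omega
    rcases h n (by omega) with he | ha
    · exact ⟨p.copy rfl he, by simpa using le_trans hp hsub⟩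
    · refine ⟨p.concat ha, ?_⟩
      rw [SimpleGraph.Walk.length_concat]
      have hcard : ((Finset.range (n+1)).filter fun i => f i ≠ f (i + 1)).card =
          ((Finset.range n).filter fun i => f i ≠ f (i + 1)).card + 1 := by
        rw [Finset.range_add_one, Finset.filter_insert, if_pos ha.ne,
          Finset.card_insert_of_notMem (by simp)]
      omega

/-- All data of an equicontractive IFS, bundled. -/
structure Ctx (d N : ℕ) where
  S : Fin N → Euc d → Euc d
  r : ℝ
  κ : ℝ
  K : Set (Euc d)
  hr0 : 0 < r
  hr1 : r < 1
  hsim : ∀ j a b, dist (S j a) (S j b) = r * dist a b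
  hκ : 0 < κ
  hKc : IsCompact K
  hKne : K.Nonempty
  hKinv : K = ⋃ j, S j '' K

namespace Ctx

variable {d N : ℕ} (C : Ctx d N)

/-- The cell of a word. -/
def cell (x : List (Fin N)) : Set (Euc d) := sWord C.S x '' C.K

/-- The diameter of the attractor. -/
noncomputable def D : ℝ := Metric.diam C.K

/-- The augmented tree. -/
def G : SimpleGraph (List (Fin N)) := augE C.S C.r C.κ C.K

/-- The horizontal graph. -/
def G' : SimpleGraph (List (Fin N)) := horizE C.S C.r C.κ C.K

lemma D_nonneg : 0 ≤ C.D := Metric.diam_nonneg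

lemma rpow_pos (n : ℕ) : 0 < C.r ^ n := pow_pos C.hr0 n

lemma sWord_cons (i : Fin N) (w : List (Fin N)) :
    sWord C.S (i :: w) = C.S i ∘ sWord C.S w := rfl

lemma sWord_append (p q : List (Fin N)) :
    sWord C.S (p ++ q) = sWord C.S p ∘ sWord C.S q := by
  induction p with
  | nil => rfl
  | cons i p ih => rw [List.cons_append, C.sWord_cons, C.sWord_cons, ih]; rfl

lemma sWord_dist (w : List (Fin N)) (a b : Euc d) :
    dist (sWord C.S w a) (sWord C.S w b) = C.r ^ w.length * dist a b := by
  induction w with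
  | nil => simp [sWord]
  | cons i w ih =>
      rw [C.sWord_cons]
      simp only [Function.comp_apply]
      rw [C.hsim, ih, List.length_cons, pow_succ]
      ring

lemma cell_nonempty (x : List (Fin N)) : (C.cell x).Nonempty := C.hKne.image _

lemma cell_subset_K (w : List (Fin N)) : C.cell w ⊆ C.K := by
  induction w with
  | nil => simp [cell, sWord]
  | cons i w ih =>
      show sWord C.S (i :: w) '' C.K ⊆ C.K
      rw [C.sWord_cons, Set.image_comp]
      refine subset_trans (Set.image_mono ih) ?_
      conv_rhs => rw [C.hKinv]
      exact Set.subset_iUnion (fun j => C.S j '' C.K) i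

lemma cell_mono {p x : List (Fin N)} (h : p <+: x) : C.cell x ⊆ C.cell p := by
  obtain ⟨t, rfl⟩ := h
  show sWord C.S (p ++ t) '' C.K ⊆ sWord C.S p '' C.K
  rw [C.sWord_append, Set.image_comp]
  exact Set.image_mono (C.cell_subset_K t)

lemma cell_bounded (x : List (Fin N)) : Bornology.IsBounded (C.cell x) := by
  rw [Metric.isBounded_iff]
  refine ⟨C.r ^ x.length * C.D, ?_⟩
  rintro a ⟨a', ha', rfl⟩ b ⟨b', hb', rfl⟩
  rw [C.sWord_dist]
  exact mul_le_mul_of_nonneg_left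
    (Metric.dist_le_diam_of_mem C.hKc.isBounded ha' hb') (pow_nonneg C.hr0.le _)

lemma cell_diam (x : List (Fin N)) :
    Metric.diam (C.cell x) ≤ C.r ^ x.length * C.D := by
  refine Metric.diam_le_of_forall_dist_le
    (mul_nonneg (pow_nonneg C.hr0.le _) C.D_nonneg) ?_
  rintro a ⟨a', ha', rfl⟩ b ⟨b', hb', rfl⟩
  rw [C.sWord_dist]
  exact mul_le_mul_of_nonneg_left (Metric.dist_le_diam_of_mem C.hKc.isBounded ha' hb')
    (pow_nonneg C.hr0.le _)

lemma EHe_symm {x y : List (Fin N)} (h : EHe C.S C.r C.κ C.K x y) :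
    EHe C.S C.r C.κ C.K y x := by
  obtain ⟨h1, h2, h3⟩ := h
  refine ⟨h1.symm, h2.symm, ?_⟩
  rw [← h1, setDist_comm']
  exact h3

lemma adj_of_EHe {x y : List (Fin N)} (h : EHe C.S C.r C.κ C.K x y) : C.G.Adj x y :=
  show (_ ∨ _ ∨ _ ∨ _) ∧ _ from ⟨Or.inr (Or.inr (Or.inl h)), h.2.1⟩

lemma G'_le_G : C.G' ≤ C.G := by
  intro a b hab
  change (_ ∨ _) ∧ _ at hab
  show (_ ∨ _ ∨ _ ∨ _) ∧ _
  obtain ⟨h1 | h1, hne⟩ := hab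
  · exact ⟨Or.inr (Or.inr (Or.inl h1)), hne⟩
  · exact ⟨Or.inr (Or.inr (Or.inr h1)), hne⟩

lemma adj_dropLast {x : List (Fin N)} (h : x ≠ []) : C.G.Adj x.dropLast x := by
  show (_ ∨ _ ∨ _ ∨ _) ∧ _
  refine ⟨Or.inl rfl, fun he => ?_⟩
  have h1 := congrArg List.length he
  rw [List.length_dropLast] at h1
  have h2 : 0 < x.length := List.length_pos_iff.mpr h
  omega

lemma adj_levels {x y : List (Fin N)} (h : C.G.Adj x y) :
    x.length = y.length ∨ x.length + 1 = y.length ∨ y.length + 1 = x.length := by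
  change (_ ∨ _ ∨ _ ∨ _) ∧ _ at h
  obtain ⟨h1 | h1 | h1 | h1, hne⟩ := h
  · subst h1
    have hy : y ≠ [] := by rintro rfl; exact hne rfl
    rw [List.length_dropLast]
    have := List.length_pos_iff.mpr hy
    omega
  · subst h1
    rw [List.length_dropLast]
    have hx : x ≠ [] := by rintro rfl; exact hne rfl
    have := List.length_pos_iff.mpr hx
    omega
  · exact Or.inl h1.1
  · exact Or.inl h1.1.symm

lemma reachable_nil : ∀ (n : ℕ) (x : List (Fin N)), x.length = n → C.G.Reachable x [] := by
  intro n
  induction n with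
  | zero =>
    intro x hx
    rw [List.length_eq_zero_iff.mp hx]
  | succ n ih =>
    intro x hx
    have hne : x ≠ [] := by rintro rfl; simp at hx
    have h1 : C.G.Reachable x x.dropLast := (C.adj_dropLast hne).symm.reachable
    exact h1.trans (ih x.dropLast (by rw [List.length_dropLast, hx]; omega))

lemma connected : C.G.Connected := by
  rw [SimpleGraph.connected_iff]
  refine ⟨fun u v => ?_, ⟨[]⟩⟩
  exact (C.reachable_nil u.length u rfl).trans (C.reachable_nil v.length v rfl).symm

lemma dist_le_one_of_adj {x y : List (Fin N)} (h : C.G.Adj x y) : C.G.dist x y ≤ 1 := by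
  simpa using SimpleGraph.dist_le (SimpleGraph.Walk.cons h SimpleGraph.Walk.nil)

lemma dist_prefix : ∀ (x p : List (Fin N)), p <+: x → C.G.dist p x ≤ x.length - p.length := by
  intro x
  induction x using List.reverseRecOn with
  | nil =>
    intro p hp
    obtain rfl := List.prefix_nil.mp hp
    simp [SimpleGraph.dist_self]
  | append_singleton xs a ih =>
    intro p hp
    by_cases hpx : p = xs ++ [a]
    · subst hpx; simp [SimpleGraph.dist_self]
    · have h1 : p.length ≤ xs.length + 1 := by simpa using hp.length_le
      have hlen : p.length ≤ xs.length := by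
        rcases eq_or_lt_of_le h1 with he | hl
        · exact absurd (hp.eq_of_length (by simpa using he)) hpx
        · omega
      have hpxs : p <+: xs := (List.isPrefix_append_of_length hlen).mp hp
      have hadj : C.G.Adj xs (xs ++ [a]) := by
        have hd : (xs ++ [a]).dropLast = xs := by simp
        have hne : xs ++ [a] ≠ [] := by simp
        have h2 := C.adj_dropLast hne
        rwa [hd] at h2
      have h3 := C.connected.dist_triangle (u := p) (v := xs) (w := xs ++ [a])
      have h4 := ih p hpxs
      have h5 := C.dist_le_one_of_adj hadj
      rw [List.length_append, List.length_singleton]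
      omega

lemma walk_level {u v : List (Fin N)} (p : C.G.Walk u v) :
    u.length ≤ v.length + p.length ∧ v.length ≤ u.length + p.length := by
  induction p with
  | nil => simp
  | @cons a b c h q ih =>
    have := C.adj_levels h
    rw [SimpleGraph.Walk.length_cons]
    omega

lemma dist_nil (x : List (Fin N)) : C.G.dist [] x = x.length := by
  refine le_antisymm ?_ ?_
  · simpa using C.dist_prefix x [] (List.nil_prefix)
  · obtain ⟨p, hp⟩ := C.connected.exists_walk_length_eq_dist [] x
    have := C.walk_level p
    simp only [List.length_nil] at this
    omega

lemma chain_len {w : ℕ → List (Fin N)} {n : ℕ}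
    (hsteps : ∀ i < n, EHe C.S C.r C.κ C.K (w i) (w (i + 1))) :
    ∀ i, i ≤ n → (w i).length = (w 0).length := by
  intro i
  induction i with
  | zero => intro _; rfl
  | succ i ih =>
    intro hi
    rw [← (hsteps i (by omega)).1]
    exact ih (by omega)

lemma cell_chain (w : ℕ → List (Fin N)) (m : ℕ) :
    ∀ n : ℕ, (∀ i, i ≤ n → (w i).length = m) →
      (∀ i, i < n → setDist (C.cell (w i)) (C.cell (w (i + 1))) ≤ C.κ * C.r ^ m) →
      setDist (C.cell (w 0)) (C.cell (w n)) ≤ n * ((C.κ + C.D) * C.r ^ m)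
  | 0, _, _ => by simpa using setDist_self_nonpos (C.cell_nonempty (w 0))
  | (n+1), hlen, hstep => by
    have ih := cell_chain w m n (fun i hi => hlen i (by omega)) (fun i hi => hstep i (by omega))
    have h1 := setDist_triangle' (C.cell_nonempty (w 0)) (C.cell_nonempty (w n))
      (C.cell_nonempty (w (n+1))) (C.cell_bounded (w n))
    have h2 : Metric.diam (C.cell (w n)) ≤ C.r ^ m * C.D := by
      have := C.cell_diam (w n)
      rwa [hlen n (by omega)] at this
    have h3 := hstep n (by omega)
    have hexp : ((n:ℝ) + 1) * ((C.κ + C.D) * C.r ^ m)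
        = (n:ℝ) * ((C.κ + C.D) * C.r ^ m) + C.r ^ m * C.D + C.κ * C.r ^ m := by ring
    push_cast
    rw [hexp]
    linarith

lemma geo (n j : ℕ) (w : ℕ → List (Fin N))
    (hsteps : ∀ i < n, EHe C.S C.r C.κ C.K (w i) (w (i + 1)))
    (hdist : C.G.dist (w 0) (w n) = n)
    (hj : (n : ℝ) * ((C.κ + C.D) * C.r ^ j) ≤ C.κ) :
    n ≤ 2 * j + 1 := by
  set m := (w 0).length with hm
  have hlen := C.chain_len hsteps
  have hchain := C.cell_chain w m n (fun i hi => hlen i hi) (fun i hi => by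
    have h := (hsteps i hi).2.2
    rwa [hlen i (le_of_lt hi)] at h)
  set p := (w 0).take (m - j) with hpdef
  set q := (w n).take (m - j) with hqdef
  have hplen : p.length = m - j := by
    rw [hpdef, List.length_take, ← hm]
    exact Nat.min_eq_left (Nat.sub_le m j)
  have hqlen : q.length = m - j := by
    rw [hqdef, List.length_take, hlen n le_rfl, ← hm]
    exact Nat.min_eq_left (Nat.sub_le m j)
  have hdp : C.G.dist (w 0) p ≤ j := by
    have h := C.dist_prefix (w 0) p (List.take_prefix _ _)
    have hc : C.G.dist (w 0) p = C.G.dist p (w 0) := SimpleGraph.dist_comm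
    omega
  have hdq : C.G.dist q (w n) ≤ j := by
    have h := C.dist_prefix (w n) q (List.take_prefix _ _)
    have h2 : (w n).length = m := by rw [hlen n le_rfl, ← hm]
    omega
  by_cases hpq : p = q
  · have htr := C.connected.dist_triangle (u := w 0) (v := p) (w := w n)
    rw [hpq] at htr hdp
    omega
  · have hjm : j < m := by
      by_contra hge
      apply hpq
      rw [hpdef, hqdef]
      have h0 : m - j = 0 := by omega
      rw [h0, List.take_zero, List.take_zero]
    have hEHe : EHe C.S C.r C.κ C.K p q := by
      refine ⟨by rw [hplen, hqlen], hpq, ?_⟩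
      have hsub1 : C.cell (w 0) ⊆ C.cell p := C.cell_mono (List.take_prefix _ _)
      have hsub2 : C.cell (w n) ⊆ C.cell q := C.cell_mono (List.take_prefix _ _)
      have h1 : setDist (C.cell p) (C.cell q) ≤ setDist (C.cell (w 0)) (C.cell (w n)) :=
        setDist_le_setDist hsub1 hsub2 (C.cell_nonempty _) (C.cell_nonempty _)
      have h2 : (n:ℝ) * ((C.κ + C.D) * C.r ^ m) ≤ C.κ * C.r ^ (m - j) := by
        have hpow : C.r ^ m = C.r ^ (m - j) * C.r ^ j := by
          rw [← pow_add]; congr 1; omega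
        rw [hpow]
        have h3 := mul_le_mul_of_nonneg_right hj (le_of_lt (C.rpow_pos (m - j)))
        calc (n:ℝ) * ((C.κ + C.D) * (C.r ^ (m - j) * C.r ^ j))
            = ((n:ℝ) * ((C.κ + C.D) * C.r ^ j)) * C.r ^ (m - j) := by ring
          _ ≤ C.κ * C.r ^ (m - j) := h3
      rw [hplen]
      exact le_trans h1 (le_trans hchain h2)
    have hadj := C.adj_of_EHe hEHe
    have htr1 := C.connected.dist_triangle (u := w 0) (v := p) (w := w n)
    have htr2 := C.connected.dist_triangle (u := p) (v := q) (w := w n)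
    have hd1 := C.dist_le_one_of_adj hadj
    omega

lemma horiz_bound : ∃ L : ℕ, 0 < L ∧ ∀ (n : ℕ) (w : ℕ → List (Fin N)),
    (∀ i < n, EHe C.S C.r C.κ C.K (w i) (w (i + 1))) →
    C.G.dist (w 0) (w n) = n → n ≤ L := by
  have hc0 : (0:ℝ) ≤ C.κ + C.D := by
    have := C.D_nonneg; have := C.hκ; linarith
  have ht : Filter.Tendsto (fun k : ℕ => ((2 * k + 3 : ℕ) : ℝ) * ((C.κ + C.D) * C.r ^ k))
      Filter.atTop (nhds 0) := by
    have h1 := tendsto_self_mul_const_pow_of_lt_one C.hr0.le C.hr1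
    have h2 := tendsto_pow_atTop_nhds_zero_of_lt_one C.hr0.le C.hr1
    have heq : (fun k : ℕ => ((2 * k + 3 : ℕ) : ℝ) * ((C.κ + C.D) * C.r ^ k)) =
        fun k : ℕ => (2 * (C.κ + C.D)) * ((k : ℝ) * C.r ^ k) + (3 * (C.κ + C.D)) * C.r ^ k := by
      funext k; push_cast; ring
    rw [heq]
    have h3 := (h1.const_mul (2 * (C.κ + C.D))).add (h2.const_mul (3 * (C.κ + C.D)))
    simpa using h3
  have hev : ∀ᶠ k in Filter.atTop,
      ((2 * k + 3 : ℕ) : ℝ) * ((C.κ + C.D) * C.r ^ k) < C.κ :=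
    ht.eventually (gt_mem_nhds C.hκ)
  obtain ⟨J, hJ⟩ := Filter.eventually_atTop.mp hev
  refine ⟨2 * J + 3, by omega, ?_⟩
  intro n w hsteps hdist
  by_contra hbig
  push_neg at hbig
  set k := (n - 2) / 2 with hk
  have hk1 : J ≤ k := by omega
  have hk2 : n ≤ 2 * k + 3 := by omega
  have hk3 : 2 * k + 1 < n := by omega
  have hjineq : (n : ℝ) * ((C.κ + C.D) * C.r ^ k) ≤ C.κ := by
    have h1 : ((n:ℕ):ℝ) ≤ ((2 * k + 3 : ℕ):ℝ) := Nat.cast_le.mpr hk2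
    have h2 : (0:ℝ) ≤ (C.κ + C.D) * C.r ^ k := mul_nonneg hc0 (pow_nonneg C.hr0.le k)
    have h3 := hJ k hk1
    nlinarith
  exact absurd (C.geo n k w hsteps hdist hjineq) (by omega)

/-- `x` and `y` are `κ`-close at level `l`. -/
def closeAt (l : ℕ) (x y : List (Fin N)) : Prop :=
  setDist (C.cell (x.take l)) (C.cell (y.take l)) ≤ C.κ * C.r ^ l

lemma closeAt_zero (x y : List (Fin N)) : C.closeAt 0 x y := by
  unfold closeAt
  rw [List.take_zero, List.take_zero]
  have h1 : setDist (C.cell []) (C.cell []) ≤ 0 := setDist_self_nonpos (C.cell_nonempty [])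
  have h2 := C.hκ
  simp only [pow_zero, mul_one]
  linarith

/-- Levels at which `x, y` are close. -/
def tset (x y : List (Fin N)) : Set ℕ :=
  {l | l ≤ min x.length y.length ∧ C.closeAt l x y}

/-- The confluence level of `x` and `y`. -/
noncomputable def tlev (x y : List (Fin N)) : ℕ := sSup (C.tset x y)

lemma tset_bddAbove (x y : List (Fin N)) : BddAbove (C.tset x y) :=
  ⟨min x.length y.length, fun _ hl => hl.1⟩

lemma tlev_mem (x y : List (Fin N)) : C.tlev x y ∈ C.tset x y :=
  Nat.sSup_mem ⟨0, ⟨Nat.zero_le _, C.closeAt_zero x y⟩⟩ (C.tset_bddAbove x y)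

lemma tlev_le (x y : List (Fin N)) : C.tlev x y ≤ min x.length y.length :=
  (C.tlev_mem x y).1

lemma tlev_close (x y : List (Fin N)) : C.closeAt (C.tlev x y) x y :=
  (C.tlev_mem x y).2

lemma le_tlev {x y : List (Fin N)} {l : ℕ}
    (h1 : l ≤ min x.length y.length) (h2 : C.closeAt l x y) : l ≤ C.tlev x y :=
  le_csSup (C.tset_bddAbove x y) ⟨h1, h2⟩

lemma closeAt_of_bound {x y : List (Fin N)} {l s : ℕ} {B : ℝ} (hs : s ≤ l)
    (h : setDist (C.cell (x.take l)) (C.cell (y.take l)) ≤ B * C.r ^ l)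
    (hB : B * C.r ^ s ≤ C.κ) :
    C.closeAt (l - s) x y := by
  unfold closeAt
  have hsub1 : C.cell (x.take l) ⊆ C.cell (x.take (l - s)) :=
    C.cell_mono (List.take_isPrefix_take.mpr (Or.inl (Nat.sub_le l s)))
  have hsub2 : C.cell (y.take l) ⊆ C.cell (y.take (l - s)) :=
    C.cell_mono (List.take_isPrefix_take.mpr (Or.inl (Nat.sub_le l s)))
  have h1 : setDist (C.cell (x.take (l - s))) (C.cell (y.take (l - s))) ≤
      setDist (C.cell (x.take l)) (C.cell (y.take l)) :=
    setDist_le_setDist hsub1 hsub2 (C.cell_nonempty _) (C.cell_nonempty _)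
  have hpow : C.r ^ l = C.r ^ s * C.r ^ (l - s) := by
    rw [← pow_add]; congr 1; omega
  calc setDist (C.cell (x.take (l - s))) (C.cell (y.take (l - s)))
      ≤ B * C.r ^ l := le_trans h1 h
    _ = (B * C.r ^ s) * C.r ^ (l - s) := by rw [hpow]; ring
    _ ≤ C.κ * C.r ^ (l - s) := mul_le_mul_of_nonneg_right hB (pow_nonneg C.hr0.le _)

lemma closeAt_mono {x y : List (Fin N)} {l l' : ℕ}
    (h : C.closeAt l x y) (hl : l' ≤ l) : C.closeAt l' x y := by
  have h2 : C.κ * C.r ^ (l - l') ≤ C.κ :=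
    mul_le_of_le_one_right C.hκ.le (pow_le_one₀ C.hr0.le C.hr1.le)
  have h3 := C.closeAt_of_bound (s := l - l') (Nat.sub_le l l') h h2
  rwa [Nat.sub_sub_self hl] at h3

lemma dist_add_tlev_le (x y : List (Fin N)) :
    C.G.dist x y + 2 * C.tlev x y ≤ x.length + y.length + 1 := by
  set t := C.tlev x y with ht
  have htle := C.tlev_le x y
  have hx : t ≤ x.length := le_trans htle (min_le_left _ _)
  have hy : t ≤ y.length := le_trans htle (min_le_right _ _)
  have hclose := C.tlev_close x y
  have hxl : (x.take t).length = t := by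
    rw [List.length_take]; exact Nat.min_eq_left hx
  have hyl : (y.take t).length = t := by
    rw [List.length_take]; exact Nat.min_eq_left hy
  have hd1 : C.G.dist (x.take t) x ≤ x.length - t := by
    have h := C.dist_prefix x (x.take t) (List.take_prefix _ _)
    omega
  have hd2 : C.G.dist (y.take t) y ≤ y.length - t := by
    have h := C.dist_prefix y (y.take t) (List.take_prefix _ _)
    omega
  have hc1 : C.G.dist x (x.take t) = C.G.dist (x.take t) x := SimpleGraph.dist_comm
  by_cases heq : x.take t = y.take t
  · have htr := C.connected.dist_triangle (u := x) (v := x.take t) (w := y)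
    have h5 : C.G.dist (x.take t) y = C.G.dist (y.take t) y := by rw [heq]
    omega
  · have hEHe : EHe C.S C.r C.κ C.K (x.take t) (y.take t) := by
      refine ⟨by rw [hxl, hyl], heq, ?_⟩
      rw [hxl]
      exact hclose
    have hadj := C.adj_of_EHe hEHe
    have h1 := C.dist_le_one_of_adj hadj
    have htr1 := C.connected.dist_triangle (u := x) (v := x.take t) (w := y)
    have htr2 := C.connected.dist_triangle (u := x.take t) (v := y.take t) (w := y)
    omega

lemma tlev_triangle {x y z : List (Fin N)} {s₀ : ℕ}
    (hs : (2 * C.κ + C.D) * C.r ^ s₀ ≤ C.κ) :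
    min (C.tlev x z) (C.tlev z y) ≤ C.tlev x y + s₀ := by
  set l := min (C.tlev x z) (C.tlev z y) with hl
  have h1 : C.closeAt l x z := C.closeAt_mono (C.tlev_close x z) (min_le_left _ _)
  have h2 : C.closeAt l z y := C.closeAt_mono (C.tlev_close z y) (min_le_right _ _)
  have hlx : l ≤ x.length :=
    le_trans (le_trans (min_le_left _ _) (C.tlev_le x z)) (min_le_left _ _)
  have hlz : l ≤ z.length :=
    le_trans (le_trans (min_le_left _ _) (C.tlev_le x z)) (min_le_right _ _)
  have hly : l ≤ y.length :=
    le_trans (le_trans (min_le_right _ _) (C.tlev_le z y)) (min_le_right _ _)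
  have hdiam : Metric.diam (C.cell (z.take l)) ≤ C.r ^ l * C.D := by
    have h := C.cell_diam (z.take l)
    rwa [List.length_take, Nat.min_eq_left hlz] at h
  have htri := setDist_triangle' (C.cell_nonempty (x.take l)) (C.cell_nonempty (z.take l))
    (C.cell_nonempty (y.take l)) (C.cell_bounded (z.take l))
  have hbound : setDist (C.cell (x.take l)) (C.cell (y.take l)) ≤ (2 * C.κ + C.D) * C.r ^ l := by
    have e1 : setDist (C.cell (x.take l)) (C.cell (z.take l)) ≤ C.κ * C.r ^ l := h1
    have e2 : setDist (C.cell (z.take l)) (C.cell (y.take l)) ≤ C.κ * C.r ^ l := h2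
    nlinarith
  by_cases hcase : s₀ ≤ l
  · have h3 := C.closeAt_of_bound hcase hbound hs
    have h4 : l - s₀ ≤ min x.length y.length := le_min (by omega) (by omega)
    have h5 := C.le_tlev h4 h3
    omega
  · omega

lemma length_le_dist (L s₀ : ℕ)
    (hL : ∀ (n : ℕ) (w : ℕ → List (Fin N)),
      (∀ i < n, EHe C.S C.r C.κ C.K (w i) (w (i + 1))) →
      C.G.dist (w 0) (w n) = n → n ≤ L)
    (hs : ((L : ℝ) * (C.κ + C.D)) * C.r ^ s₀ ≤ C.κ)
    (x y : List (Fin N)) :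
    x.length + y.length ≤ C.G.dist x y + 2 * C.tlev x y + 2 * s₀ := by
  obtain ⟨p, hp⟩ := C.connected.exists_walk_length_eq_dist x y
  set n := C.G.dist x y with hn
  set f : ℕ → List (Fin N) := fun i => p.getVert i with hf
  have hf0 : f 0 = x := p.getVert_zero
  have hfn : f n = y := by
    show p.getVert n = y
    rw [← hp]
    exact p.getVert_length
  have hadj : ∀ i < n, C.G.Adj (f i) (f (i + 1)) := fun i hi =>
    p.adj_getVert_succ (by omega)
  obtain ⟨istar, histar, hmin⟩ := Finset.exists_min_image (Finset.range (n + 1))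
      (fun i => (f i).length) ⟨0, by simp⟩
  set l := (f istar).length with hldef
  have histar' : istar ≤ n := by
    have := Finset.mem_range.mp histar
    omega
  have hminle : ∀ i, i ≤ n → l ≤ (f i).length := fun i hi =>
    hmin i (Finset.mem_range.mpr (by omega))
  have hlx : l ≤ x.length := by
    have h := hminle 0 (by omega)
    rwa [hf0] at h
  have hly : l ≤ y.length := by
    have h := hminle n le_rfl
    rwa [hfn] at h
  set V := ((Finset.range n).filter fun i => (f i).length ≠ (f (i + 1)).length).card with hV
  have hVn : V ≤ n := le_trans (Finset.card_filter_le _ _) (le_of_eq (Finset.card_range n))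
  -- SC1 : levels vary by at most one per vertical step
  have hSC1 : x.length + y.length ≤ 2 * l + V := by
    set A : ℕ → ℤ := fun i => ((f i).length : ℤ) with hA
    have hstep : ∀ i ∈ Finset.range n, |A (i + 1) - A i| ≤
        (if (f i).length ≠ (f (i + 1)).length then (1:ℤ) else 0) := by
      intro i hi
      simp only [Finset.mem_range] at hi
      by_cases hne : (f i).length = (f (i + 1)).length
      · rw [if_neg (by simp [hne])]
        simp [hA, hne]
      · rw [if_pos hne, abs_le]
        rcases C.adj_levels (hadj i hi) with h | h | h
        · exact absurd h hne
        · constructor <;> simp only [hA] <;> omega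
        · constructor <;> simp only [hA] <;> omega
    have hsum : ∑ i ∈ Finset.range n, |A (i + 1) - A i| ≤ (V : ℤ) := by
      calc ∑ i ∈ Finset.range n, |A (i + 1) - A i|
          ≤ ∑ i ∈ Finset.range n,
            (if (f i).length ≠ (f (i + 1)).length then (1:ℤ) else 0) :=
            Finset.sum_le_sum hstep
        _ = (V : ℤ) := by rw [Finset.sum_boole, hV]
    have htel1 : A istar - A 0 = ∑ i ∈ Finset.range istar, (A (i + 1) - A i) :=
      (Finset.sum_range_sub A istar).symm
    have htel2 : A n - A istar = ∑ i ∈ Finset.Ico istar n, (A (i + 1) - A i) := by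
      rw [Finset.sum_Ico_eq_sub _ histar', Finset.sum_range_sub A n,
        Finset.sum_range_sub A istar]
      ring
    have habs1 : A 0 - A istar ≤ ∑ i ∈ Finset.range istar, |A (i + 1) - A i| := by
      have h := Finset.abs_sum_le_sum_abs (fun i => A (i + 1) - A i) (Finset.range istar)
      rw [← htel1] at h
      calc A 0 - A istar ≤ |A istar - A 0| := by
            rw [abs_sub_comm]; exact le_abs_self _
        _ ≤ _ := h
    have habs2 : A n - A istar ≤ ∑ i ∈ Finset.Ico istar n, |A (i + 1) - A i| := by
      calc A n - A istar = ∑ i ∈ Finset.Ico istar n, (A (i + 1) - A i) := htel2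
        _ ≤ |∑ i ∈ Finset.Ico istar n, (A (i + 1) - A i)| := le_abs_self _
        _ ≤ _ := Finset.abs_sum_le_sum_abs _ _
    have hsplit : (∑ i ∈ Finset.range istar, |A (i + 1) - A i|)
        + ∑ i ∈ Finset.Ico istar n, |A (i + 1) - A i|
        = ∑ i ∈ Finset.range n, |A (i + 1) - A i| := by
      rw [Finset.range_eq_Ico, Finset.range_eq_Ico]
      exact Finset.sum_Ico_consecutive (fun i => |A (i + 1) - A i|) (Nat.zero_le istar) histar'
    have hA0 : A 0 = (x.length : ℤ) := by simp only [hA]; rw [hf0]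
    have hAn : A n = (y.length : ℤ) := by simp only [hA]; rw [hfn]
    have hAi : A istar = (l : ℤ) := rfl
    have hfinal : (x.length : ℤ) + y.length ≤ 2 * l + V := by
      rw [hA0, hAi] at habs1
      rw [hAn, hAi] at habs2
      linarith
    omega
  -- projection to level l
  set g : ℕ → List (Fin N) := fun i => (f i).take l with hg
  have hgstep : ∀ i < n, g i = g (i + 1) ∨
      (C.G'.Adj (g i) (g (i + 1)) ∧ (f i).length = (f (i + 1)).length) := by
    intro i hi
    obtain ⟨hcases, hne⟩ : (f i = (f (i + 1)).dropLast ∨ f (i + 1) = (f i).dropLast ∨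
        EHe C.S C.r C.κ C.K (f i) (f (i + 1)) ∨ EHe C.S C.r C.κ C.K (f (i + 1)) (f i)) ∧
        f i ≠ f (i + 1) := hadj i hi
    have hli : l ≤ (f i).length := hminle i (by omega)
    have hli1 : l ≤ (f (i + 1)).length := hminle (i + 1) (by omega)
    have hEHcase : ∀ hEH : EHe C.S C.r C.κ C.K (f i) (f (i + 1)), g i = g (i + 1) ∨
        (C.G'.Adj (g i) (g (i + 1)) ∧ (f i).length = (f (i + 1)).length) := by
      intro hEH
      by_cases hgeq : (f i).take l = (f (i + 1)).take l
      · exact Or.inl hgeq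
      · right
        refine ⟨show (_ ∨ _) ∧ _ from ⟨Or.inl ?_, hgeq⟩, hEH.1⟩
        refine ⟨?_, hgeq, ?_⟩
        · rw [List.length_take, List.length_take, Nat.min_eq_left hli, Nat.min_eq_left hli1]
        · have hsub1 : C.cell (f i) ⊆ C.cell ((f i).take l) :=
            C.cell_mono (List.take_prefix _ _)
          have hsub2 : C.cell (f (i + 1)) ⊆ C.cell ((f (i + 1)).take l) :=
            C.cell_mono (List.take_prefix _ _)
          have h1 : setDist (C.cell ((f i).take l)) (C.cell ((f (i + 1)).take l)) ≤
              setDist (C.cell (f i)) (C.cell (f (i + 1))) :=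
            setDist_le_setDist hsub1 hsub2 (C.cell_nonempty _) (C.cell_nonempty _)
          have h2 := hEH.2.2
          have h3 : C.κ * C.r ^ (f i).length ≤ C.κ * C.r ^ l :=
            mul_le_mul_of_nonneg_left
              (pow_le_pow_of_le_one C.hr0.le C.hr1.le hli) C.hκ.le
          rw [List.length_take, Nat.min_eq_left hli]
          exact le_trans h1 (le_trans h2 h3)
    rcases hcases with h | h | h | h
    · left
      show (f i).take l = (f (i + 1)).take l
      have hli' : l ≤ (f (i + 1)).length - 1 := by
        have := hli
        rw [h, List.length_dropLast] at this
        omega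
      rw [h, List.dropLast_eq_take, List.take_take, Nat.min_eq_left hli']
    · left
      show (f i).take l = (f (i + 1)).take l
      have hli1' : l ≤ (f i).length - 1 := by
        have := hli1
        rw [h, List.length_dropLast] at this
        omega
      rw [h, List.dropLast_eq_take, List.take_take, Nat.min_eq_left hli1']
    · exact hEHcase h
    · rcases hEHcase (C.EHe_symm h) with h' | ⟨h1, h2⟩
      · exact Or.inl h'
      · exact Or.inr ⟨h1, h2⟩
  obtain ⟨q, hq⟩ := walk_of_chain C.G' g n (fun i hi => (hgstep i hi).imp id And.left)
  have hcard : ((Finset.range n).filter fun i => g i ≠ g (i + 1)).card ≤ n - V := by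
    have hsubset : ((Finset.range n).filter fun i => g i ≠ g (i + 1)) ⊆
        ((Finset.range n).filter fun i => ¬((f i).length ≠ (f (i + 1)).length)) := by
      intro i hi
      rw [Finset.mem_filter] at hi ⊢
      refine ⟨hi.1, ?_⟩
      rcases hgstep i (Finset.mem_range.mp hi.1) with he | ⟨_, hlen⟩
      · exact absurd he hi.2
      · exact fun hcon => hcon hlen
    have h1 := Finset.card_le_card hsubset
    have h2 := Finset.card_filter_add_card_filter_not
      (s := Finset.range n) (p := fun i => (f i).length ≠ (f (i + 1)).length)
    rw [Finset.card_range] at h2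
    omega
  have hq0 : g 0 = x.take l := by
    show (f 0).take l = x.take l
    rw [hf0]
  have hqn : g n = y.take l := by
    show (f n).take l = y.take l
    rw [hfn]
  set dG := C.G.dist (x.take l) (y.take l) with hdG
  set h' := C.G'.dist (x.take l) (y.take l) with hh'
  have hreach : C.G'.Reachable (x.take l) (y.take l) := ⟨q.copy hq0 hqn⟩
  have e3 : h' ≤ n - V := by
    have h1 : C.G'.dist (List.take l x) (List.take l y) ≤ (q.copy hq0 hqn).length :=
      SimpleGraph.dist_le _
    rw [SimpleGraph.Walk.length_copy] at h1
    omega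
  have e2 : dG ≤ h' := by
    obtain ⟨q', hq'⟩ := hreach.exists_walk_length_eq_dist
    have h1 : C.G.dist (x.take l) (y.take l) ≤ (q'.mapLe C.G'_le_G).length :=
      SimpleGraph.dist_le _
    have h2 : (q'.mapLe C.G'_le_G).length = q'.length := by
      show (q'.map (SimpleGraph.Hom.ofLE C.G'_le_G)).length = q'.length
      exact SimpleGraph.Walk.length_map _ q'
    omega
  have hxl : (x.take l).length = l := by
    rw [List.length_take]; exact Nat.min_eq_left hlx
  have hyl : (y.take l).length = l := by
    rw [List.length_take]; exact Nat.min_eq_left hly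
  have e1 : n ≤ (x.length - l) + dG + (y.length - l) := by
    have t1 := C.connected.dist_triangle (u := x) (v := x.take l) (w := y)
    have t2 := C.connected.dist_triangle (u := x.take l) (v := y.take l) (w := y)
    have d1 := C.dist_prefix x (x.take l) (List.take_prefix _ _)
    have d2 := C.dist_prefix y (y.take l) (List.take_prefix _ _)
    have c1 : C.G.dist x (x.take l) = C.G.dist (x.take l) x := SimpleGraph.dist_comm
    have c2 : C.G.dist (y.take l) y = C.G.dist y (y.take l) := SimpleGraph.dist_comm
    omega
  by_cases hteq : x.take l = y.take l
  · have hclose : C.closeAt l x y := by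
      show setDist (C.cell (x.take l)) (C.cell (y.take l)) ≤ C.κ * C.r ^ l
      rw [hteq]
      have h1 := setDist_self_nonpos (C.cell_nonempty (y.take l))
      have h2 : 0 < C.κ * C.r ^ l := mul_pos C.hκ (C.rpow_pos l)
      linarith
    have hlle := C.le_tlev (le_min hlx hly) hclose
    omega
  · have hpos : 0 < h' := hreach.pos_dist_of_ne hteq
    have e4 : dG = h' := by omega
    obtain ⟨p', hp'⟩ := hreach.exists_walk_length_eq_dist
    have hp'' : p'.length = h' := hp'
    set w' : ℕ → List (Fin N) := fun i => p'.getVert i with hw'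
    have hw0 : w' 0 = x.take l := p'.getVert_zero
    have hwh : w' h' = y.take l := by
      show p'.getVert h' = y.take l
      rw [← hp'']
      exact p'.getVert_length
    have hsteps' : ∀ i < h', EHe C.S C.r C.κ C.K (w' i) (w' (i + 1)) := by
      intro i hi
      have hadj' := p'.adj_getVert_succ (i := i) (by omega)
      change (_ ∨ _) ∧ _ at hadj'
      rcases hadj'.1 with h | h
      · exact h
      · exact C.EHe_symm h
    have hdist' : C.G.dist (w' 0) (w' h') = h' := by
      rw [hw0, hwh]
      exact e4
    have hLbound := hL h' w' hsteps' hdist'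
    have hlen' : ∀ i, i ≤ h' → (w' i).length = l := by
      have hc := C.chain_len hsteps'
      intro i hi
      rw [hc i hi, hw0, hxl]
    have hchain := C.cell_chain w' l h' hlen' (fun i hi => by
      have h := (hsteps' i hi).2.2
      rwa [hlen' i hi.le] at h)
    rw [hw0, hwh] at hchain
    by_cases hcase : s₀ ≤ l
    · have hbnd : setDist (C.cell (x.take l)) (C.cell (y.take l)) ≤
          ((L:ℝ) * (C.κ + C.D)) * C.r ^ l := by
        have h1 : (h' : ℝ) ≤ (L : ℝ) := Nat.cast_le.mpr hLbound
        have h2 : (0:ℝ) ≤ (C.κ + C.D) * C.r ^ l := by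
          have := C.D_nonneg; have := C.hκ
          have := pow_nonneg C.hr0.le l
          nlinarith
        calc setDist (C.cell (x.take l)) (C.cell (y.take l))
            ≤ (h' : ℝ) * ((C.κ + C.D) * C.r ^ l) := hchain
          _ ≤ (L : ℝ) * ((C.κ + C.D) * C.r ^ l) := mul_le_mul_of_nonneg_right h1 h2
          _ = ((L:ℝ) * (C.κ + C.D)) * C.r ^ l := by ring
      have hclose := C.closeAt_of_bound hcase hbnd hs
      have hlle := C.le_tlev (le_min (by omega) (by omega)) hclose
      omega
    · omega

end Ctx


/-- A simple augmented tree of an equicontractive IFS is Gromov hyperbolic;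
indeed the lengths of its horizontal geodesics are uniformly bounded. -/
theorem simple_implies_hyperbolic {d N : ℕ} (hN : 2 ≤ N)
    (S : Fin N → Euc d → Euc d) (r κ : ℝ) (K : Set (Euc d))
    (hr0 : 0 < r) (hr1 : r < 1)
    (hsim : ∀ j a b, dist (S j a) (S j b) = r * dist a b)
    (hκ : 0 < κ)
    (hKc : IsCompact K) (hKne : K.Nonempty) (hKinv : K = ⋃ j, S j '' K)
    (hsimple : SimpleAug S r κ K) :
    GromovHyperbolic (augE S r κ K) ([] : List (Fin N)) ∧
    ∃ L : ℕ, 0 < L ∧ ∀ (n : ℕ) (w : ℕ → List (Fin N)),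
      IsHorizGeodesicE S r κ K n w → n ≤ L := by
  set C : Ctx d N := ⟨S, r, κ, K, hr0, hr1, hsim, hκ, hKc, hKne, hKinv⟩ with hCdef
  have hG : augE S r κ K = C.G := rfl
  obtain ⟨L, hL0, hL⟩ := C.horiz_bound
  have hD0 := C.D_nonneg
  have hκ0 := C.hκ
  have hLc : (0:ℝ) ≤ (L:ℝ) := Nat.cast_nonneg L
  have hMpos : (0:ℝ) < (L:ℝ) * (C.κ + C.D) + (2 * C.κ + C.D) := by nlinarith
  obtain ⟨s₀, hs₀⟩ := exists_pow_lt_of_lt_one (div_pos C.hκ hMpos) C.hr1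
  have hsM : ((L:ℝ) * (C.κ + C.D) + (2 * C.κ + C.D)) * C.r ^ s₀ ≤ C.κ := by
    have h1 := (lt_div_iff₀ hMpos).mp hs₀
    nlinarith
  have hp0 : (0:ℝ) ≤ C.r ^ s₀ := pow_nonneg C.hr0.le s₀
  have hdistr : ((L:ℝ) * (C.κ + C.D)) * C.r ^ s₀ + (2 * C.κ + C.D) * C.r ^ s₀
      = ((L:ℝ) * (C.κ + C.D) + (2 * C.κ + C.D)) * C.r ^ s₀ := by ring
  have hsM' : ((L:ℝ) * (C.κ + C.D)) * C.r ^ s₀ + (2 * C.κ + C.D) * C.r ^ s₀ ≤ C.κ := by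
    rw [hdistr]; exact hsM
  have hs1 : ((L:ℝ) * (C.κ + C.D)) * C.r ^ s₀ ≤ C.κ := by
    have h2 : (0:ℝ) ≤ (2 * C.κ + C.D) * C.r ^ s₀ := mul_nonneg (by linarith) hp0
    linarith
  have hs2 : (2 * C.κ + C.D) * C.r ^ s₀ ≤ C.κ := by
    have h2 : (0:ℝ) ≤ ((L:ℝ) * (C.κ + C.D)) * C.r ^ s₀ :=
      mul_nonneg (mul_nonneg hLc (by linarith)) hp0
    linarith
  constructor
  · refine ⟨2 * s₀ + 1/2, by positivity, ?_⟩
    intro x y z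
    have key_up : ∀ a b : List (Fin N),
        gprod (augE S r κ K) [] a b ≤ (C.tlev a b : ℝ) + s₀ := by
      intro a b
      have h1 := C.length_le_dist L s₀ hL hs1 a b
      have h2 : ((a.length + b.length : ℕ) : ℝ) ≤
          ((C.G.dist a b + 2 * C.tlev a b + 2 * s₀ : ℕ) : ℝ) := Nat.cast_le.mpr h1
      unfold gprod
      rw [hG, C.dist_nil a, C.dist_nil b]
      push_cast at h2 ⊢
      linarith
    have key_lo : ∀ a b : List (Fin N),
        (C.tlev a b : ℝ) - 1/2 ≤ gprod (augE S r κ K) [] a b := by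
      intro a b
      have h1 := C.dist_add_tlev_le a b
      have h2 : ((C.G.dist a b + 2 * C.tlev a b : ℕ) : ℝ) ≤
          ((a.length + b.length + 1 : ℕ) : ℝ) := Nat.cast_le.mpr h1
      unfold gprod
      rw [hG, C.dist_nil a, C.dist_nil b]
      push_cast at h2 ⊢
      linarith
    have htri := C.tlev_triangle (x := x) (y := y) (z := z) hs2
    have htri' : ((min (C.tlev x z) (C.tlev z y) : ℕ) : ℝ) ≤ (C.tlev x y : ℝ) + s₀ := by
      exact_mod_cast htri
    have hminc : ((min (C.tlev x z) (C.tlev z y) : ℕ) : ℝ) =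
        min ((C.tlev x z : ℕ) : ℝ) ((C.tlev z y : ℕ) : ℝ) := Nat.cast_min _ _
    have h1 := key_up x z
    have h2 := key_up z y
    have h3 := key_lo x y
    have h4 : min (gprod (augE S r κ K) [] x z) (gprod (augE S r κ K) [] z y) ≤
        min ((C.tlev x z : ℝ) + s₀) ((C.tlev z y : ℝ) + s₀) := min_le_min h1 h2
    rw [min_add_add_right, ← hminc] at h4
    linarith
  · refine ⟨L, hL0, ?_⟩
    intro n w hw
    exact hL n w hw.1 hw.2


end HypIFS
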